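/- If P and Q are symmetric operators on a common dense invariant domain with [Q, P] = iI, then there is no vector Ψ ≠ 0 in the domain that is a simultaneous eigenvector of both P and Q; in fact [Q, P] = iI implies that neither P nor Q can be bounded operators on the whole Hilbert space (Wintner–Wielandt). -/

import Mathlib

/-- Wielandt's theorem: in a nontrivial normed algebra over ℂ (here bounded
operators), the commutator of two elements cannot be `i • 1`. -/
lemma wielandt_aux {H : Type*} [NormedAddCommGroup H] [InnerProductSpace ℂ H]
    [Nontrivial H]
    (P' Q' : H →L[ℂ] H) (h : Q' * P' - P' * Q' = Complex.I • 1) : False := by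
  have key : ∀ n : ℕ, Q' * P' ^ (n + 1) - P' ^ (n + 1) * Q'
      = ((Complex.I * (n + 1)) • P' ^ n) := by
    intro n
    induction n with
    | zero => simpa using h
    | succ n ih =>
      have : Q' * P' ^ (n + 2) - P' ^ (n + 2) * Q'
          = (Q' * P' ^ (n + 1) - P' ^ (n + 1) * Q') * P'
            + P' ^ (n + 1) * (Q' * P' - P' * Q') := by
        simp only [pow_succ]
        noncomm_ring
      rw [this, ih, h]
      push_cast
      simp only [smul_mul_assoc, mul_smul_comm, mul_one, ← pow_succ]
      rw [← add_smul]
      ring_nf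
  have hne : ∀ n : ℕ, P' ^ n ≠ 0 := by
    intro n
    induction n with
    | zero => simpa using (one_ne_zero : (1 : H →L[ℂ] H) ≠ 0)
    | succ n ih =>
      intro h0
      have hI : (Complex.I * (n + 1)) ≠ 0 :=
        mul_ne_zero Complex.I_ne_zero (Nat.cast_add_one_ne_zero n)
      have h2 : (Complex.I * (n + 1)) • P' ^ n = 0 := by
        rw [← key n, h0]; simp
      exact ih ((smul_eq_zero.mp h2).resolve_left hI)
  -- norm estimate
  have bound : ∀ n : ℕ, (n + 1 : ℝ) ≤ 2 * ‖Q'‖ * ‖P'‖ := by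
    intro n
    have h1 : ‖(Complex.I * (n + 1)) • P' ^ n‖ = (n + 1) * ‖P' ^ n‖ := by
      rw [norm_smul (Complex.I * ((n:ℂ) + 1)) (P' ^ n)]
      congr 1
      rw [norm_mul, Complex.norm_I, one_mul]
      have : ((n : ℂ) + 1) = ((n + 1 : ℕ) : ℂ) := by push_cast; ring
      rw [this]
      exact_mod_cast Complex.norm_natCast (n + 1)
    have h2 : ‖Q' * P' ^ (n + 1) - P' ^ (n + 1) * Q'‖
        ≤ 2 * ‖Q'‖ * ‖P'‖ * ‖P' ^ n‖ := by
      calc ‖Q' * P' ^ (n + 1) - P' ^ (n + 1) * Q'‖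
          ≤ ‖Q' * P' ^ (n + 1)‖ + ‖P' ^ (n + 1) * Q'‖ := norm_sub_le _ _
        _ ≤ ‖Q'‖ * ‖P' ^ (n + 1)‖ + ‖P' ^ (n + 1)‖ * ‖Q'‖ :=
            add_le_add (norm_mul_le _ _) (norm_mul_le _ _)
        _ ≤ ‖Q'‖ * (‖P'‖ * ‖P' ^ n‖) + (‖P'‖ * ‖P' ^ n‖) * ‖Q'‖ := by
            have hp : ‖P' ^ (n + 1)‖ ≤ ‖P'‖ * ‖P' ^ n‖ := by
              rw [pow_succ']
              exact norm_mul_le _ _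
            have hq0 : (0:ℝ) ≤ ‖Q'‖ := norm_nonneg _
            gcongr
        _ = 2 * ‖Q'‖ * ‖P'‖ * ‖P' ^ n‖ := by ring
    have hpos : 0 < ‖P' ^ n‖ := norm_pos_iff.mpr (hne n)
    have := key n ▸ h2
    rw [h1] at this
    exact le_of_mul_le_mul_right (by linarith) hpos
  obtain ⟨n, hn⟩ := exists_nat_gt (2 * ‖Q'‖ * ‖P'‖)
  have := bound n
  have : (n : ℝ) < (n : ℝ) + 1 := by linarith
  linarith [bound n, hn]

/-- If symmetric `P, Q` on a common dense invariant domain satisfy `[Q, P] = iI`,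
then (1) they have no common eigenvector in the domain, and (2) the relation
`[Q, P] = iI` cannot be realized by bounded operators on the whole Hilbert space
(Wintner–Wielandt). -/
theorem Wintner_Wielandt
    {H : Type*} [NormedAddCommGroup H] [InnerProductSpace ℂ H] [CompleteSpace H]
    [Nontrivial H]
    (D : Submodule ℂ H) (hdense : Dense (D : Set H))
    (p q : H →ₗ[ℂ] H)
    (hpD : ∀ x ∈ D, p x ∈ D) (hqD : ∀ x ∈ D, q x ∈ D)
    (hpsym : ∀ x ∈ D, ∀ y ∈ D, (inner ℂ (p x) y : ℂ) = inner ℂ x (p y))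
    (hqsym : ∀ x ∈ D, ∀ y ∈ D, (inner ℂ (q x) y : ℂ) = inner ℂ x (q y))
    (hccr : ∀ x ∈ D, q (p x) - p (q x) = Complex.I • x) :
    (¬ ∃ Ψ : H, Ψ ∈ D ∧ Ψ ≠ 0 ∧ ∃ μ ν : ℂ, p Ψ = μ • Ψ ∧ q Ψ = ν • Ψ) ∧
    (∀ P' Q' : H →L[ℂ] H, Q' * P' - P' * Q' ≠ Complex.I • 1) := by
  constructor
  · rintro ⟨Ψ, hΨD, hΨne, μ, ν, hp, hq⟩
    have h := hccr Ψ hΨD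
    rw [hp, hq, map_smul, map_smul, hp, hq, smul_smul, smul_smul,
      mul_comm ν μ, sub_self] at h
    exact hΨne (by
      have := h.symm
      rw [smul_eq_zero] at this
      exact this.resolve_left Complex.I_ne_zero)
  · intro P' Q' h
    exact wielandt_aux P' Q' h
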